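/- Let n ∈ ℕ, α ∈ (0, π/4), σ ∈ (0, π/2 − 2α), λ ∈ ℂ with |λ| ≤ sin α, and t ∈ [0, 1]. Let D be the (n+1)×(n+1) complex diagonal matrix D = diag{(1 + λt)^{−2}, 1, …, 1}, and let W be an (n+1)×(n+1) complex matrix such that max_{i,j} |W_{ij} − D_{ij}| ≤ c, where c ≥ 0 satisfies (n+1)²·c ≤ (cos(2α)/4)·sin σ. Then for every nonzero Z ∈ ℂ^{n+1}, the number q = Σ_{i,j} conj(Z_i)·W_{ij}·Z_j satisfies q ≠ 0 and |arg q| ≤ 2α + σ < π/2. -/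

import Mathlib

open Real Complex Finset

private lemma aux_key (s co pre pim : ℝ) (hs : 0 ≤ s)
    (h : pre ^ 2 + pim ^ 2 ≤ s ^ 2) (hpy : s ^ 2 + co ^ 2 = 1) :
    |pim| * co ≤ (1 + pre) * s := by
  nlinarith [sq_nonneg (|pim| * s + pre * co), _root_.sq_abs pim, abs_nonneg pim,
    sq_nonneg (|pim| * co - pre * s - s)]

private lemma aux_core1 (sa ca X Y : ℝ) (hpy : sa ^ 2 + ca ^ 2 = 1)
    (hkey : |Y| * ca ≤ X * sa) (hX : 0 < X) (hsa : 0 ≤ sa) (hca : 0 ≤ ca) :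
    (2 * ca ^ 2 - 1) * (X ^ 2 + Y ^ 2) ≤ X ^ 2 - Y ^ 2 := by
  nlinarith [_root_.sq_abs Y, abs_nonneg Y,
    mul_nonneg (mul_nonneg (abs_nonneg Y) hca) (sub_nonneg.2 hkey),
    mul_nonneg (mul_nonneg hX.le hsa) (sub_nonneg.2 hkey)]

private lemma aux_L1div (C M XY2 : ℝ) (hC : 0 ≤ C) (hM4 : M ≤ 4) (hM : 0 < M)
    (hcore : C * M ≤ XY2) : C / 4 ≤ XY2 / M ^ 2 := by
  rw [div_le_div_iff₀ (by norm_num) (by positivity)]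
  nlinarith [mul_le_mul_of_nonneg_right hcore hM.le, mul_le_mul_of_nonneg_left hM4 (mul_nonneg hC hM.le)]

private lemma aux_L2core (sa ca X Y : ℝ)
    (hkey : |Y| * ca ≤ X * sa) (hX : 0 < X) (hsa : 0 ≤ sa) (hca : 0 ≤ ca) :
    (ca ^ 2 - sa ^ 2) * (2 * X * |Y|) ≤ 2 * sa * ca * (X ^ 2 - Y ^ 2) := by
  have hfac : 2 * sa * ca * (X ^ 2 - |Y| ^ 2) - (ca ^ 2 - sa ^ 2) * (2 * X * |Y|) =
      2 * (X * ca + |Y| * sa) * (X * sa - |Y| * ca) := by ring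
  have ha : (0 : ℝ) ≤ X * ca + |Y| * sa :=
    add_nonneg (mul_nonneg hX.le hca) (mul_nonneg (abs_nonneg Y) hsa)
  have h1 : 0 ≤ 2 * (X * ca + |Y| * sa) * (X * sa - |Y| * ca) :=
    mul_nonneg (mul_nonneg (by norm_num) ha) (sub_nonneg.2 hkey)
  rw [_root_.sq_abs Y] at hfac
  linarith

private lemma aux_L2div (C SI X Y M : ℝ) (hM : 0 < M)
    (hcore : C * (2 * X * |Y|) ≤ SI * (X ^ 2 - Y ^ 2)) :
    C * (2 * X * |Y| / M ^ 2) ≤ SI * ((X ^ 2 - Y ^ 2) / M ^ 2) := by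
  rw [mul_div_assoc', mul_div_assoc']
  exact (div_le_div_iff_of_pos_right (by positivity)).2 hcore

private lemma aux_CS (a b R sb cb ε : ℝ) (hR : a ^ 2 + b ^ 2 = R ^ 2) (hR0 : 0 ≤ R)
    (hpy : sb ^ 2 + cb ^ 2 = 1) (hε : ε = 1 ∨ ε = -1) :
    -R ≤ sb * a - ε * cb * b := by
  have hε2 : ε ^ 2 = 1 := by rcases hε with h | h <;> rw [h] <;> norm_num
  have hsq : (sb * a - ε * cb * b) ^ 2 ≤ R ^ 2 := by
    have hid : (sb * a - ε * cb * b) ^ 2 + (ε * cb * a + sb * b) ^ 2 =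
        (a ^ 2 + b ^ 2) * (sb ^ 2 + ε ^ 2 * cb ^ 2) := by ring
    rw [hε2, one_mul, hpy, mul_one, hR] at hid
    linarith [sq_nonneg (ε * cb * a + sb * b)]
  exact (abs_le_of_sq_le_sq' hsq hR0).1

private lemma aux_sector (sβ cβ sθ cθ sσ wre wim A S N rre rim R K ε : ℝ)
    (hpyβ : sβ ^ 2 + cβ ^ 2 = 1) (hε : ε = 1 ∨ ε = -1)
    (hcθ : 0 < cθ) (hcθ1 : cθ ≤ 1) (hsθ : 0 ≤ sθ)
    (hcβ : 0 < cβ) (hsσ : 0 < sσ)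
    (hsub : sβ * cθ - cβ * sθ = sσ)
    (hA : 0 ≤ A) (hS : 0 ≤ S)
    (hL2 : cθ * |wim| ≤ sθ * wre)
    (hz0re : K * N ≤ A * wre + S) (hKN : 0 < K * N)
    (hr2 : rre ^ 2 + rim ^ 2 = R ^ 2) (hR0 : 0 ≤ R)
    (hRle : R ≤ sσ * (K * N)) :
    0 ≤ sβ * (A * wre + S + rre) - ε * cβ * (A * wim + rim) := by
  have h2 : ε * (A * wim) ≤ |A * wim| := by
    rcases hε with h | h
    · rw [h, one_mul]; exact le_abs_self _
    · rw [h, neg_one_mul]; exact neg_le_abs _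
  have h1 : cθ * |A * wim| ≤ sθ * (A * wre) := by
    rw [abs_mul, _root_.abs_of_nonneg hA]
    calc cθ * (A * |wim|) = A * (cθ * |wim|) := by ring
    _ ≤ A * (sθ * wre) := mul_le_mul_of_nonneg_left hL2 hA
    _ = sθ * (A * wre) := by ring
  have hεwim : cθ * (ε * (A * wim)) ≤ sθ * (A * wre + S) := by
    have := mul_le_mul_of_nonneg_left h2 hcθ.le
    nlinarith [mul_nonneg hsθ hS]
  have hP : 0 < A * wre + S := lt_of_lt_of_le hKN hz0re
  have hcF : sσ * (A * wre + S) ≤ cθ * (sβ * (A * wre + S) - ε * cβ * (A * wim)) := by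
    have := mul_le_mul_of_nonneg_left hεwim hcβ.le
    nlinarith
  have hF : sσ * (A * wre + S) ≤ sβ * (A * wre + S) - ε * cβ * (A * wim) := by
    have hG0 : 0 ≤ sσ * (A * wre + S) := mul_nonneg hsσ.le hP.le
    nlinarith
  have hCS : -R ≤ sβ * rre - ε * cβ * rim := aux_CS rre rim R sβ cβ ε hr2 hR0 hpyβ hε
  have hmono : sσ * (K * N) ≤ sσ * (A * wre + S) := mul_le_mul_of_nonneg_left hz0re hsσ.le
  nlinarith

private lemma aux_repos (K N R sσ z rre : ℝ) (hKN : 0 < K * N) (hsσ : 0 < sσ) (hsσ1 : sσ < 1)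
    (hRle : R ≤ sσ * (K * N)) (hz : K * N ≤ z) (hrre : |rre| ≤ R) : 0 < z + rre := by
  have := neg_le_of_abs_le hrre
  nlinarith

private lemma aux_im (qre qim Q sβ cβ : ℝ) (hQ : qre ^ 2 + qim ^ 2 = Q ^ 2) (hQ0 : 0 ≤ Q)
    (hpy : sβ ^ 2 + cβ ^ 2 = 1) (hsβ : 0 < sβ) (hcβ : 0 < cβ)
    (h : 0 ≤ sβ * qre - cβ * qim) (hqre : 0 ≤ qre) : qim ≤ sβ * Q := by
  rcases le_or_gt qim 0 with hq | hq
  · have : 0 ≤ sβ * Q := mul_nonneg hsβ.le hQ0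
    linarith
  · have h1 : cβ * qim ≤ sβ * qre := by linarith
    have h2 : qim ^ 2 ≤ (sβ * Q) ^ 2 := by
      have e1 : 0 ≤ (sβ * qre - cβ * qim) * (sβ * qre + cβ * qim) :=
        mul_nonneg h (by positivity)
      have e2 : cβ ^ 2 * qim ^ 2 = (1 - sβ ^ 2) * qim ^ 2 := by rw [← hpy]; ring
      have e3 : (sβ * Q) ^ 2 = sβ ^ 2 * (qre ^ 2 + qim ^ 2) := by rw [mul_pow, hQ]
      nlinarith [e1, e2, e3]
    exact (abs_le_of_sq_le_sq' h2 (mul_nonneg hsβ.le hQ0)).2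

set_option maxHeartbeats 1000000 in
theorem perturbed_numerical_range (n : ℕ) (α σ : ℝ) (hα : α ∈ Set.Ioo 0 (Real.pi / 4))
    (hσ : σ ∈ Set.Ioo 0 (Real.pi / 2 - 2 * α))
    (lam : ℂ) (hlam : ‖lam‖ ≤ Real.sin α) (t : ℝ) (ht : t ∈ Set.Icc (0 : ℝ) 1)
    (D W : Matrix (Fin (n + 1)) (Fin (n + 1)) ℂ)
    (hD : D = Matrix.diagonal (fun i => if i = 0 then ((1 + lam * t) ^ 2)⁻¹ else 1))
    (c : ℝ) (hc : 0 ≤ c)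
    (hcsmall : ((n : ℝ) + 1) ^ 2 * c ≤ (Real.cos (2 * α) / 4) * Real.sin σ)
    (hW : ∀ i j, ‖W i j - D i j‖ ≤ c) :
    ∀ Z : Fin (n + 1) → ℂ, Z ≠ 0 →
      (∑ i, ∑ j, (starRingEnd ℂ) (Z i) * W i j * Z j) ≠ 0 ∧
      |Complex.arg (∑ i, ∑ j, (starRingEnd ℂ) (Z i) * W i j * Z j)| ≤ 2 * α + σ ∧
      2 * α + σ < Real.pi / 2 := by
  obtain ⟨hα0, hα1⟩ := hα
  obtain ⟨hσ0, hσ1⟩ := hσ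
  have hπ := Real.pi_pos
  have hβlt : 2 * α + σ < Real.pi / 2 := by linarith
  have hcosα : 0 < Real.cos α := Real.cos_pos_of_mem_Ioo ⟨by linarith, by linarith⟩
  have hsinα : 0 < Real.sin α := Real.sin_pos_of_pos_of_lt_pi hα0 (by linarith)
  have hpyα : Real.sin α ^ 2 + Real.cos α ^ 2 = 1 := Real.sin_sq_add_cos_sq α
  have hsinα1 : Real.sin α < 1 := by nlinarith
  have hcosθ : 0 < Real.cos (2 * α) := Real.cos_pos_of_mem_Ioo ⟨by linarith, by linarith⟩
  have hcosθ1 : Real.cos (2 * α) ≤ 1 := Real.cos_le_one _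
  have hsinθ : 0 ≤ Real.sin (2 * α) :=
    Real.sin_nonneg_of_nonneg_of_le_pi (by linarith) (by linarith)
  have hsinσ : 0 < Real.sin σ := Real.sin_pos_of_pos_of_lt_pi hσ0 (by linarith)
  have hcosσ : 0 < Real.cos σ := Real.cos_pos_of_mem_Ioo ⟨by linarith, by linarith⟩
  have hpyσ : Real.sin σ ^ 2 + Real.cos σ ^ 2 = 1 := Real.sin_sq_add_cos_sq σ
  have hsinσ1 : Real.sin σ < 1 := by nlinarith
  have hcosβ : 0 < Real.cos (2 * α + σ) := Real.cos_pos_of_mem_Ioo ⟨by linarith, by linarith⟩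
  have hsinβ : 0 < Real.sin (2 * α + σ) :=
    Real.sin_pos_of_pos_of_lt_pi (by linarith) (by linarith)
  have hpyβ : Real.sin (2 * α + σ) ^ 2 + Real.cos (2 * α + σ) ^ 2 = 1 :=
    Real.sin_sq_add_cos_sq (2 * α + σ)
  have hsinsub : Real.sin (2 * α + σ) * Real.cos (2 * α) -
      Real.cos (2 * α + σ) * Real.sin (2 * α) = Real.sin σ := by
    have := Real.sin_sub (2 * α + σ) (2 * α)
    simp only [add_sub_cancel_left] at this
    linarith [this]
  -- the complex number u = 1 + lam t and w = (u^2)⁻¹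
  set u : ℂ := 1 + lam * (t : ℂ) with hu
  set w : ℂ := (u ^ 2)⁻¹ with hw
  set p : ℂ := lam * (t : ℂ) with hp
  have hpabs : ‖p‖ ≤ Real.sin α := by
    rw [hp, norm_mul, Complex.norm_real, Real.norm_eq_abs, _root_.abs_of_nonneg ht.1]
    calc ‖lam‖ * t ≤ Real.sin α * 1 := mul_le_mul hlam ht.2 ht.1 hsinα.le
    _ = Real.sin α := mul_one _
  have hpsq : p.re ^ 2 + p.im ^ 2 ≤ Real.sin α ^ 2 := by
    have h1 : ‖p‖ ^ 2 = p.re ^ 2 + p.im ^ 2 := by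
      rw [Complex.sq_norm, Complex.normSq_apply]; ring
    nlinarith [norm_nonneg p]
  have hure : u.re = 1 + p.re := by simp [hu, hp]
  have huim : u.im = p.im := by simp [hu, hp]
  set X : ℝ := u.re with hX
  set Y : ℝ := u.im with hY
  have hprebd : |p.re| ≤ Real.sin α := by
    nlinarith [abs_nonneg p.re, _root_.sq_abs p.re, sq_nonneg p.im]
  have hXpos : 0 < X := by
    rw [hure]; cases abs_le.1 hprebd; linarith
  have hkey : |Y| * Real.cos α ≤ X * Real.sin α := by
    rw [huim, hure]
    exact aux_key (Real.sin α) (Real.cos α) p.re p.im hsinα.le hpsq hpyα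
  have hM4 : X ^ 2 + Y ^ 2 ≤ 4 := by
    have h2 : |p.im| ≤ Real.sin α := by
      nlinarith [abs_nonneg p.im, _root_.sq_abs p.im, sq_nonneg p.re]
    have h3 := abs_le.1 hprebd
    have h4 := abs_le.1 h2
    rw [hure, huim]
    nlinarith
  set M : ℝ := X ^ 2 + Y ^ 2 with hMdef
  have hMpos : 0 < M := by positivity
  have hwre : w.re = (X ^ 2 - Y ^ 2) / M ^ 2 := by
    rw [hw, Complex.inv_re, map_pow, sq u, Complex.mul_re, Complex.normSq_apply, hMdef]
    rw [hX, hY]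
    ring_nf
  have hwim : w.im = -(2 * X * Y) / M ^ 2 := by
    rw [hw, Complex.inv_im, map_pow, sq u, Complex.mul_im, Complex.normSq_apply, hMdef]
    rw [hX, hY]
    ring_nf
  clear_value M X Y w p u
  have hcore1 : Real.cos (2 * α) * M ≤ X ^ 2 - Y ^ 2 := by
    have := aux_core1 (Real.sin α) (Real.cos α) X Y hpyα hkey hXpos hsinα.le hcosα.le
    have hc2 : Real.cos (2 * α) = 2 * Real.cos α ^ 2 - 1 := Real.cos_two_mul α
    rw [hMdef, hc2]; exact this
  have hL1 : Real.cos (2 * α) / 4 ≤ w.re := by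
    rw [hwre]
    exact aux_L1div _ _ _ hcosθ.le hM4 hMpos hcore1
  have hL2 : Real.cos (2 * α) * |w.im| ≤ Real.sin (2 * α) * w.re := by
    have him : |w.im| = 2 * X * |Y| / M ^ 2 := by
      rw [hwim, abs_div, abs_neg, _root_.abs_of_pos (by positivity : (0:ℝ) < M ^ 2),
        abs_mul, abs_mul, _root_.abs_of_nonneg (by norm_num : (0:ℝ) ≤ 2),
        _root_.abs_of_pos hXpos]
    have hcore2 := aux_L2core (Real.sin α) (Real.cos α) X Y hkey hXpos hsinα.le hcosα.le
    have hs2 : Real.sin (2 * α) = 2 * Real.sin α * Real.cos α := Real.sin_two_mul α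
    have hc2 : Real.cos (2 * α) = Real.cos α ^ 2 - Real.sin α ^ 2 := Real.cos_two_mul' α
    rw [him, hwre, hs2, hc2]
    exact aux_L2div _ _ _ _ _ hMpos hcore2
  -- now the main argument for each Z
  intro Z hZ
  set A : ℝ := Complex.normSq (Z 0) with hA
  set S : ℝ := ∑ i : Fin n, Complex.normSq (Z i.succ) with hS
  set N : ℝ := A + S with hN
  have hA0 : 0 ≤ A := Complex.normSq_nonneg _
  have hS0 : 0 ≤ S := Finset.sum_nonneg fun i _ => Complex.normSq_nonneg _
  have hNsum : N = ∑ i, Complex.normSq (Z i) := by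
    rw [hN, hA, hS, Fin.sum_univ_succ]
  have hNpos : 0 < N := by
    rw [hNsum]
    obtain ⟨i, hi⟩ : ∃ i, Z i ≠ 0 := by
      by_contra h; push_neg at h; exact hZ (funext h)
    exact Finset.sum_pos' (fun j _ => Complex.normSq_nonneg _)
      ⟨i, Finset.mem_univ i, Complex.normSq_pos.2 hi⟩
  clear_value N S A
  -- decompose the quadratic form
  set r : ℂ := ∑ i, ∑ j, (starRingEnd ℂ) (Z i) * (W i j - D i j) * Z j with hr
  clear_value r
  have hz0 : (∑ i, ∑ j, (starRingEnd ℂ) (Z i) * D i j * Z j) = (A : ℂ) * w + (S : ℂ) := by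
    have hinner : ∀ i, (∑ j, (starRingEnd ℂ) (Z i) * D i j * Z j) =
        (starRingEnd ℂ) (Z i) * (if i = 0 then w else 1) * Z i := by
      intro i
      rw [Finset.sum_eq_single i]
      · rw [hD, Matrix.diagonal_apply_eq]
      · intro j _ hj
        rw [hD, Matrix.diagonal_apply_ne' _ hj, mul_zero, zero_mul]
      · intro h; exact absurd (Finset.mem_univ i) h
    simp only [hinner]
    rw [Fin.sum_univ_succ]
    have h0 : (starRingEnd ℂ) (Z 0) * (if (0 : Fin (n + 1)) = 0 then w else 1) * Z 0 =
        (A : ℂ) * w := by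
      rw [if_pos rfl, hA, mul_comm ((starRingEnd ℂ) (Z 0)) w, mul_assoc,
        mul_comm ((starRingEnd ℂ) (Z 0)) (Z 0), Complex.mul_conj, mul_comm]
    have hsucc : ∀ i : Fin n, (starRingEnd ℂ) (Z i.succ) *
        (if i.succ = (0 : Fin (n + 1)) then w else 1) * Z i.succ =
        (Complex.normSq (Z i.succ) : ℂ) := by
      intro i
      rw [if_neg (Fin.succ_ne_zero i), mul_one, mul_comm, Complex.mul_conj]
    rw [h0]
    congr 1
    rw [hS]
    push_cast
    exact Finset.sum_congr rfl fun i _ => hsucc i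
  have hsplit : (∑ i, ∑ j, (starRingEnd ℂ) (Z i) * W i j * Z j) = (A : ℂ) * w + (S : ℂ) + r := by
    rw [← hz0, hr, ← Finset.sum_add_distrib]
    apply Finset.sum_congr rfl; intro i _
    rw [← Finset.sum_add_distrib]
    apply Finset.sum_congr rfl; intro j _
    ring
  -- bound on r
  have hrabs : ‖r‖ ≤ Real.sin σ * ((Real.cos (2 * α) / 4) * N) := by
    rw [hr]
    have h1 : ‖∑ i, ∑ j, (starRingEnd ℂ) (Z i) * (W i j - D i j) * Z j‖ ≤
        ∑ i, ∑ j, ‖Z i‖ * c * ‖Z j‖ := by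
      refine (norm_sum_le _ _).trans ?_
      refine Finset.sum_le_sum fun i _ => ?_
      refine (norm_sum_le _ _).trans ?_
      refine Finset.sum_le_sum fun j _ => ?_
      rw [norm_mul, norm_mul, Complex.norm_conj]
      exact mul_le_mul_of_nonneg_right
        (mul_le_mul_of_nonneg_left (hW i j) (norm_nonneg _)) (norm_nonneg _)
    have h2 : (∑ i, ∑ j, ‖Z i‖ * c * ‖Z j‖) =
        c * (∑ i, ‖Z i‖) ^ 2 := by
      rw [sq, Finset.sum_mul_sum, Finset.mul_sum]
      refine Finset.sum_congr rfl fun i _ => ?_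
      rw [Finset.mul_sum]
      refine Finset.sum_congr rfl fun j _ => ?_
      ring
    have h3 : (∑ i, ‖Z i‖) ^ 2 ≤ ((n : ℝ) + 1) * N := by
      have hcheb := sq_sum_le_card_mul_sum_sq (s := (Finset.univ : Finset (Fin (n + 1))))
        (f := fun i => ‖Z i‖)
      simp only [Finset.card_univ, Fintype.card_fin] at hcheb
      calc (∑ i, ‖Z i‖) ^ 2 ≤ ((n : ℝ) + 1) * ∑ i, ‖Z i‖ ^ 2 := by
            push_cast at hcheb ⊢; convert hcheb using 2
      _ = ((n : ℝ) + 1) * N := by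
            rw [hNsum]; congr 1; exact Finset.sum_congr rfl fun i _ => Complex.sq_norm _
    have h4 : c * (((n : ℝ) + 1) * N) ≤ Real.sin σ * ((Real.cos (2 * α) / 4) * N) := by
      have hn1 : (1 : ℝ) ≤ (n : ℝ) + 1 := by linarith [(Nat.cast_nonneg n : (0:ℝ) ≤ (n:ℝ))]
      have h5 : ((n : ℝ) + 1) * c ≤ ((n : ℝ) + 1) ^ 2 * c := by
        apply mul_le_mul_of_nonneg_right _ hc
        calc ((n : ℝ) + 1) = ((n : ℝ) + 1) * 1 := (mul_one _).symm
        _ ≤ ((n : ℝ) + 1) * ((n : ℝ) + 1) := by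
            apply mul_le_mul_of_nonneg_left hn1; linarith
        _ = ((n : ℝ) + 1) ^ 2 := (sq _).symm
      have h6 : ((n : ℝ) + 1) * c ≤ (Real.cos (2 * α) / 4) * Real.sin σ := le_trans h5 hcsmall
      calc c * (((n : ℝ) + 1) * N) = (((n : ℝ) + 1) * c) * N := by ring
      _ ≤ ((Real.cos (2 * α) / 4) * Real.sin σ) * N := mul_le_mul_of_nonneg_right h6 hNpos.le
      _ = Real.sin σ * ((Real.cos (2 * α) / 4) * N) := by ring
    calc ‖∑ i, ∑ j, (starRingEnd ℂ) (Z i) * (W i j - D i j) * Z j‖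
        ≤ c * (∑ i, ‖Z i‖) ^ 2 := by rw [← h2]; exact h1
    _ ≤ c * (((n : ℝ) + 1) * N) := mul_le_mul_of_nonneg_left h3 hc
    _ ≤ _ := h4
  -- real and imaginary parts of q
  set q : ℂ := ∑ i, ∑ j, (starRingEnd ℂ) (Z i) * W i j * Z j with hq
  clear_value q
  have hqre : q.re = A * w.re + S + r.re := by
    rw [hsplit]; simp [Complex.add_re, Complex.mul_re]
  have hqim : q.im = A * w.im + r.im := by
    rw [hsplit]; simp [Complex.add_im, Complex.mul_im]
  set K : ℝ := Real.cos (2 * α) / 4 with hK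
  have hKpos : 0 < K := by rw [hK]; positivity
  have hz0re : K * N ≤ A * w.re + S := by
    have hL1' : K ≤ w.re := by rw [hK]; exact hL1
    have h8 : K ≤ 1 := by rw [hK]; linarith
    rw [hN]
    calc K * (A + S) = K * A + K * S := by ring
    _ ≤ w.re * A + 1 * S :=
      add_le_add (mul_le_mul_of_nonneg_right hL1' hA0) (mul_le_mul_of_nonneg_right h8 hS0)
    _ = A * w.re + S := by ring
  have hKN : 0 < K * N := mul_pos hKpos hNpos
  have hrre : |r.re| ≤ ‖r‖ := Complex.abs_re_le_norm r
  have hrim : |r.im| ≤ ‖r‖ := Complex.abs_im_le_norm r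
  have hrsq : r.re ^ 2 + r.im ^ 2 = ‖r‖ ^ 2 := by
    rw [Complex.sq_norm, Complex.normSq_apply]; ring
  have hrabs' : ‖r‖ ≤ Real.sin σ * (K * N) := by rw [hK]; exact hrabs
  have hqrepos : 0 < q.re := by
    rw [hqre]
    exact aux_repos K N (‖r‖) (Real.sin σ) (A * w.re + S) r.re
      hKN hsinσ hsinσ1 hrabs' hz0re hrre
  have hup : 0 ≤ Real.sin (2 * α + σ) * q.re - Real.cos (2 * α + σ) * q.im := by
    have := aux_sector (Real.sin (2 * α + σ)) (Real.cos (2 * α + σ)) (Real.sin (2 * α))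
      (Real.cos (2 * α)) (Real.sin σ) w.re w.im A S N r.re r.im (‖r‖) K 1
      hpyβ (Or.inl rfl) hcosθ hcosθ1 hsinθ hcosβ hsinσ hsinsub hA0 hS0 hL2 hz0re hKN
      hrsq (norm_nonneg r) hrabs'
    rw [hqre, hqim]
    linarith [this]
  have hdown : 0 ≤ Real.sin (2 * α + σ) * q.re + Real.cos (2 * α + σ) * q.im := by
    have := aux_sector (Real.sin (2 * α + σ)) (Real.cos (2 * α + σ)) (Real.sin (2 * α))
      (Real.cos (2 * α)) (Real.sin σ) w.re w.im A S N r.re r.im (‖r‖) K (-1)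
      hpyβ (Or.inr rfl) hcosθ hcosθ1 hsinθ hcosβ hsinσ hsinsub hA0 hS0 hL2 hz0re hKN
      hrsq (norm_nonneg r) hrabs'
    rw [hqre, hqim]
    linarith [this]
  -- conclude
  have hqne : q ≠ 0 := by
    intro h; rw [h] at hqrepos; simp at hqrepos
  refine ⟨hqne, ?_, hβlt⟩
  have habsq : 0 < ‖q‖ := norm_pos_iff.mpr hqne
  have habsq2 : q.re ^ 2 + q.im ^ 2 = ‖q‖ ^ 2 := by
    rw [Complex.sq_norm, Complex.normSq_apply]; ring
  have him_le : q.im ≤ Real.sin (2 * α + σ) * ‖q‖ :=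
    aux_im q.re q.im (‖q‖) _ _ habsq2 habsq.le hpyβ hsinβ hcosβ
      (by linarith) hqrepos.le
  have him_ge : -(Real.sin (2 * α + σ) * ‖q‖) ≤ q.im := by
    have := aux_im q.re (-q.im) (‖q‖) _ _ (by rw [← habsq2]; ring) habsq.le hpyβ
      hsinβ hcosβ (by linarith) hqrepos.le
    linarith
  rw [show Complex.arg q = Real.arcsin (q.im / ‖q‖) from
    Complex.arg_of_re_nonneg hqrepos.le, abs_le]
  have hb1 := abs_le.1 (Complex.abs_im_div_norm_le_one q)
  constructor
  · rw [neg_le, ← Real.arcsin_neg]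
    refine Real.arcsin_le_iff_le_sin ⟨by linarith, by linarith⟩ ⟨by linarith, by linarith⟩ |>.2 ?_
    rw [← neg_div, div_le_iff₀ habsq]
    linarith
  · refine Real.arcsin_le_iff_le_sin ⟨by linarith, by linarith⟩ ⟨by linarith, by linarith⟩ |>.2 ?_
    rw [div_le_iff₀ habsq]
    linarith
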